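/- (Weak Birkhoff–von Neumann theorem, countable version.) Let X be a countably infinite set and Y a finite set with |Y| = l. Then for every probabilistic map γ : X → PMF(Y) there exist a countable index set I, deterministic functions γ_i : X → Y (i ∈ I), and weights a_i ∈ [0,1] with Σ_{i∈I} a_i = 1 such that γ(x) = Σ_{i∈I} a_i · δ_{γ_i(x)} for every x ∈ X. -/

import Mathlib

open scoped ENNReal


private lemma bvn_geom_one : ∑' k : ℕ, ((2:ℝ≥0∞)⁻¹)^(k+1) = 1 := by
  calc ∑' k : ℕ, ((2:ℝ≥0∞)⁻¹)^(k+1) = ∑' k : ℕ, (2:ℝ≥0∞)⁻¹^k * 2⁻¹ := by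
        simp [pow_succ]
    _ = (1 - 2⁻¹)⁻¹ * 2⁻¹ := by rw [ENNReal.tsum_mul_right, ENNReal.tsum_geometric]
    _ = 1 := by
        have : (1:ℝ≥0∞) - 2⁻¹ = 2⁻¹ := by
          rw [ENNReal.sub_eq_of_eq_add (by norm_num)]
          exact ENNReal.inv_two_add_inv_two.symm
        rw [this, inv_inv, ENNReal.mul_inv_cancel (by norm_num) (by norm_num)]


private lemma bvn_half_pow_add (k : ℕ) : ((2:ℝ≥0∞)⁻¹)^(k+1) + ((2:ℝ≥0∞)⁻¹)^(k+1) = ((2:ℝ≥0∞)⁻¹)^k := by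
  rw [← two_mul, pow_succ, mul_comm ((2:ℝ≥0∞)⁻¹^k), ← mul_assoc,
    ENNReal.mul_inv_cancel (by norm_num) (by norm_num), one_mul]

/-- binary expansion in ℝ≥0∞ -/
private lemma bvn_exists_expansion (f : ℝ≥0∞) (hf : f ≤ 1) :
    ∃ T : ℕ → Bool, ∑' k, (if T k then ((2:ℝ≥0∞)⁻¹)^(k+1) else 0) = f := by
  classical
  let G : ℕ → ℝ≥0∞ := fun n => Nat.rec 0
    (fun k g => g + if g + (2:ℝ≥0∞)⁻¹^(k+1) ≤ f then (2:ℝ≥0∞)⁻¹^(k+1) else 0) n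
  have hG0 : G 0 = 0 := rfl
  have hGs : ∀ k, G (k+1) = G k + if G k + (2:ℝ≥0∞)⁻¹^(k+1) ≤ f then (2:ℝ≥0∞)⁻¹^(k+1) else 0 :=
    fun k => rfl
  have hle : ∀ n, G n ≤ f := by
    intro n; induction n with
    | zero => simp [hG0]
    | succ k ih =>
      rw [hGs k]
      split
      · assumption
      · simpa using ih
  have hub : ∀ n, f ≤ G n + (2:ℝ≥0∞)⁻¹^n := by
    intro n; induction n with
    | zero => simpa [hG0] using hf
    | succ k ih =>
      rw [hGs k]
      split
      · calc f ≤ G k + (2:ℝ≥0∞)⁻¹^k := ih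
          _ = G k + ((2:ℝ≥0∞)⁻¹^(k+1) + (2:ℝ≥0∞)⁻¹^(k+1)) := by rw [bvn_half_pow_add]
          _ = G k + (2:ℝ≥0∞)⁻¹^(k+1) + (2:ℝ≥0∞)⁻¹^(k+1) := by ring
      · rename_i h
        push_neg at h
        rw [add_zero]
        exact le_of_lt h
  refine ⟨fun k => decide (G k + (2:ℝ≥0∞)⁻¹^(k+1) ≤ f), ?_⟩
  have hiff : ∀ k, (decide (G k + (2:ℝ≥0∞)⁻¹^(k+1) ≤ f) = true) ↔
      (G k + (2:ℝ≥0∞)⁻¹^(k+1) ≤ f) := fun k => decide_eq_true_iff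
  have hpart : ∀ n, ∑ k ∈ Finset.range n,
      (if decide (G k + (2:ℝ≥0∞)⁻¹^(k+1) ≤ f) then ((2:ℝ≥0∞)⁻¹)^(k+1) else 0) = G n := by
    intro n; induction n with
    | zero => simp [hG0]
    | succ k ih =>
      rw [Finset.sum_range_succ, ih, hGs]
      congr 1
      simp only [decide_eq_true_iff]
  have htsum : ∑' k, (if decide (G k + (2:ℝ≥0∞)⁻¹^(k+1) ≤ f) then ((2:ℝ≥0∞)⁻¹)^(k+1) else 0)
      = ⨆ n, G n := by
    rw [ENNReal.tsum_eq_iSup_nat]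
    exact iSup_congr hpart
  rw [htsum]
  apply le_antisymm
  · exact iSup_le hle
  · apply ENNReal.le_of_forall_pos_le_add
    intro ε hε hfin
    obtain ⟨n, hn⟩ : ∃ n, (2:ℝ≥0∞)⁻¹^n < ε := by
      have := ENNReal.exists_inv_two_pow_lt (a := (ε:ℝ≥0∞)) (by exact_mod_cast hε.ne')
      simpa using this
    calc f ≤ G n + (2:ℝ≥0∞)⁻¹^n := hub n
      _ ≤ (⨆ n, G n) + ε := add_le_add (le_iSup G n) hn.le


private lemma bvn_pi_tsum_prod : ∀ (n : ℕ) (v : Fin n → ℕ → ℝ≥0∞),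
    ∑' k : (Fin n → ℕ), ∏ j, v j (k j) = ∏ j, ∑' m, v j m := by
  intro n
  induction n with
  | zero =>
    intro v
    simp only [Finset.univ_eq_empty, Finset.prod_empty]
    exact tsum_eq_single (fun i => i.elim0) (fun b hb =>
      absurd (funext fun i => i.elim0) hb)
  | succ n ih =>
    intro v
    rw [← Equiv.tsum_eq (Fin.consEquiv (fun _ : Fin (n+1) => ℕ))]
    have h1 : ∀ q : ℕ × (Fin n → ℕ),
        ∏ j, v j ((Fin.consEquiv (fun _ : Fin (n+1) => ℕ)) q j)
        = v 0 q.1 * ∏ j : Fin n, v j.succ (q.2 j) := by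
      rintro ⟨a, b⟩
      rw [Fin.prod_univ_succ]
      simp [Fin.consEquiv]
    rw [tsum_congr h1, ENNReal.tsum_prod']
    simp only
    simp_rw [ENNReal.tsum_mul_left]
    rw [ENNReal.tsum_mul_right, ih (fun j m => v j.succ m), Fin.prod_univ_succ, mul_comm]



private lemma bvn_vector_decomp (m : ℕ) (p : Fin (m+1) → ℝ≥0∞) (hp : ∑ j, p j = 1) :
    ∃ c : (Fin (m+1) → ℕ) → Fin (m+1), ∀ j,
      ∑' k : (Fin (m+1) → ℕ),
        (if c k = j then (∏ j', ((2:ℝ≥0∞)⁻¹)^(k j' + 1)) else 0) = p j := by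
  classical
  set q : ℕ → ℝ≥0∞ := fun x => ((2:ℝ≥0∞)⁻¹)^(x+1) with hq
  set P : ℕ → ℝ≥0∞ := fun t => if h : t < m+1 then p ⟨t, h⟩ else 0 with hP
  set W : ℕ → ℝ≥0∞ := fun t => ∑ s ∈ Finset.Ico t (m+1), P s with hW
  have hW0 : W 0 = 1 := by
    rw [hW]
    simp only [← Finset.range_eq_Ico]
    rw [← hp, ← Fin.sum_univ_eq_sum_range (fun t => P t)]
    apply Finset.sum_congr rfl
    intro j _
    rw [hP]; simp only; rw [dif_pos j.isLt]
  have hWs : ∀ t, t < m+1 → W t = P t + W (t+1) := by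
    intro t ht
    rw [hW]
    exact Finset.sum_eq_sum_Ico_succ_bot ht _
  have hWlast : W m = P m := by
    have := hWs m (by omega)
    simpa [hW, Finset.Ico_self] using this
  have hW1 : ∀ t, W t ≤ 1 := by
    intro t
    rw [← hW0]
    apply Finset.sum_le_sum_of_subset
    apply Finset.Ico_subset_Ico (Nat.zero_le t) le_rfl
  have hPW : ∀ t, P t ≤ W t := by
    intro t
    by_cases h : t < m+1
    · rw [hWs t h]; exact le_self_add
    · simp [hP, h, show ¬ t ≤ m by omega]
  have hPtop : ∀ t, P t ≠ ∞ := fun t => (((hPW t).trans (hW1 t)).trans_lt ENNReal.one_lt_top).ne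
  set f : ℕ → ℝ≥0∞ := fun t => P t / W t with hf
  have hf1 : ∀ t, f t ≤ 1 := by
    intro t
    apply ENNReal.div_le_of_le_mul
    rw [one_mul]; exact hPW t
  have hWf : ∀ t, W t * f t = P t := by
    intro t
    rcases eq_or_ne (W t) 0 with h0 | h0
    · have : P t = 0 := le_antisymm (h0 ▸ hPW t) zero_le
      simp [hf, h0, this]
    · exact ENNReal.mul_div_cancel h0 (((hW1 t).trans_lt ENNReal.one_lt_top).ne)
  choose T hT using fun t => bvn_exists_expansion (f t) (hf1 t)
  set u : ℕ → ℝ≥0∞ := fun t => ∑' x, (if T t x then 0 else q x) with hu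
  have hfu : ∀ t, f t + u t = 1 := by
    intro t
    rw [← hT t, hu, ← ENNReal.tsum_add, ← bvn_geom_one]
    apply tsum_congr
    intro x
    by_cases h : T t x <;> simp [h, hq]
  have hWu : ∀ t, t < m+1 → W t * u t = W (t+1) := by
    intro t ht
    have h1 : P t + W t * u t = W t := by
      conv_rhs => rw [← mul_one (W t), ← hfu t]
      rw [mul_add, hWf t]
    have h2 : P t + W (t+1) = W t := by rw [← hWs t ht]
    exact (ENNReal.cancel_of_ne (hPtop t)).inj.mp (h1.trans h2.symm)
  have prodU : ∀ t, t ≤ m + 1 → ∏ s ∈ Finset.range t, u s = W t := by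
    intro t
    induction t with
    | zero => intro _; simp [hW0]
    | succ t ih =>
      intro ht
      rw [Finset.prod_range_succ, ih (by omega), hWu t (by omega)]
  set c : (Fin (m+1) → ℕ) → Fin (m+1) := fun k =>
    if h : (Finset.univ.filter (fun j : Fin (m+1) => T j.val (k j) = true)).Nonempty
    then (Finset.univ.filter (fun j : Fin (m+1) => T j.val (k j) = true)).min' h
    else Fin.last m with hcdef
  have hc : ∀ k j, c k = j ↔
      ((T j.val (k j) = true ∨ j = Fin.last m) ∧ ∀ j' < j, ¬ (T j'.val (k j') = true)) := by
    intro k j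
    set S := Finset.univ.filter (fun j : Fin (m+1) => T j.val (k j) = true) with hS
    have hmemS : ∀ j', j' ∈ S ↔ T j'.val (k j') = true := by
      intro j'; simp [hS]
    constructor
    · intro hckj
      rw [hcdef] at hckj
      simp only at hckj
      by_cases h : S.Nonempty
      · rw [dif_pos h] at hckj
        have hjS : j ∈ S := hckj ▸ S.min'_mem h
        refine ⟨Or.inl ((hmemS j).mp hjS), ?_⟩
        intro j' hj' hT'
        have hle : S.min' h ≤ j' := S.min'_le j' ((hmemS j').mpr hT')
        rw [hckj] at hle
        exact absurd (hle.trans_lt hj') (lt_irrefl j)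
      · rw [dif_neg h] at hckj
        refine ⟨Or.inr hckj.symm, ?_⟩
        intro j' hj' hT'
        exact h ⟨j', (hmemS j').mpr hT'⟩
    · rintro ⟨hor, hmin⟩
      rw [hcdef]
      simp only
      by_cases h : S.Nonempty
      · rw [dif_pos h]
        have hj0S : S.min' h ∈ S := S.min'_mem h
        have h1 : ¬ (S.min' h < j) := fun hlt => hmin _ hlt ((hmemS _).mp hj0S)
        have h2 : S.min' h ≤ j := by
          rcases hor with hTj | hjlast
          · exact S.min'_le j ((hmemS j).mpr hTj)
          · rw [hjlast]; exact Fin.le_last _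
        exact le_antisymm h2 (not_lt.mp h1)
      · rw [dif_neg h]
        rcases hor with hTj | hjlast
        · exact absurd ⟨j, (hmemS j).mpr hTj⟩ h
        · exact hjlast.symm
  refine ⟨c, ?_⟩
  intro j
  set v : Fin (m+1) → ℕ → ℝ≥0∞ := fun j' x =>
    if j' < j then (if T j'.val x then 0 else q x)
    else if j' = j ∧ j ≠ Fin.last m then (if T j.val x then q x else 0)
    else q x with hv
  have hfac : ∀ k : Fin (m+1) → ℕ,
      (if c k = j then (∏ j', q (k j')) else 0) = ∏ j', v j' (k j') := by
    intro k
    by_cases hckj : c k = j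
    · rw [if_pos hckj]
      obtain ⟨hor, hmin⟩ := (hc k j).mp hckj
      apply Finset.prod_congr rfl
      intro j' _
      rcases lt_trichotomy j' j with hlt | heq | hgt
      · rw [hv]; simp [hlt, hmin j' hlt]
      · subst heq
        by_cases hlast : j' = Fin.last m
        · rw [hv]; simp [hlast]
        · rcases hor with hTj | h'
          · rw [hv]; simp [hlast, hTj]
          · exact absurd h' hlast
      · rw [hv]; simp [not_lt.mpr hgt.le, hgt.ne']
    · rw [if_neg hckj]
      symm
      by_cases hex : ∃ j' < j, T j'.val (k j') = true
      · obtain ⟨j', hj', hT'⟩ := hex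
        apply Finset.prod_eq_zero (Finset.mem_univ j')
        rw [hv]; simp [hj', hT']
      · push_neg at hex
        have hnor : ¬ (T j.val (k j) = true ∨ j = Fin.last m) := by
          intro hor
          exact hckj ((hc k j).mpr ⟨hor, hex⟩)
        push_neg at hnor
        apply Finset.prod_eq_zero (Finset.mem_univ j)
        rw [hv]; simp [hnor.1, hnor.2]
  have ht : j.val < m + 1 := j.isLt
  set F : ℕ → ℝ≥0∞ := fun i =>
    if i < j.val then u i else if i = j.val ∧ j.val ≠ m then f j.val else 1 with hF
  have hvs : ∀ j' : Fin (m+1), ∑' x, v j' x = F j'.val := by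
    intro j'
    rcases lt_trichotomy j' j with hlt | heq | hgt
    · have hlt' : j'.val < j.val := hlt
      rw [hF]
      simp only [if_pos hlt']
      apply tsum_congr
      intro x
      rw [hv]; simp [hlt]
    · subst heq
      by_cases hlast : j' = Fin.last m
      · have hm : j'.val = m := by rw [hlast, Fin.val_last]
        rw [hF]
        simp only [lt_irrefl, if_false, hm, ne_eq, not_true_eq_false, and_false]
        rw [← bvn_geom_one]
        apply tsum_congr
        intro x
        rw [hv]; simp [hlast, hq]
      · have hvaln : j'.val ≠ m := fun hh => hlast (Fin.ext (by rw [hh, Fin.val_last]))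
        rw [hF]
        simp only [lt_irrefl, if_false, hvaln, ne_eq, not_false_eq_true, and_true, if_pos rfl]
        rw [← hT j'.val]
        apply tsum_congr
        intro x
        rw [hv]
        by_cases hTx : T j'.val x <;> simp [hTx, hq, hlast]
    · have h1 : ¬ (j'.val < j.val) := not_lt.mpr (show j.val ≤ j'.val from hgt.le)
      have h2 : j'.val ≠ j.val := fun hh => hgt.ne' (Fin.ext hh)
      rw [hF]
      simp only [if_neg h1, h2, ne_eq, false_and, if_false]
      rw [← bvn_geom_one]
      apply tsum_congr
      intro x
      rw [hv]; simp [not_lt.mpr hgt.le, hgt.ne', hq]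
  calc ∑' k : (Fin (m+1) → ℕ), (if c k = j then (∏ j', q (k j')) else 0)
      = ∑' k : (Fin (m+1) → ℕ), ∏ j', v j' (k j') := tsum_congr hfac
    _ = ∏ j', ∑' x, v j' x := bvn_pi_tsum_prod (m+1) v
    _ = ∏ j' : Fin (m+1), F j'.val := Finset.prod_congr rfl (fun j' _ => hvs j')
    _ = ∏ i ∈ Finset.range (m+1), F i := Fin.prod_univ_eq_prod_range F (m+1)
    _ = (∏ i ∈ Finset.range (j.val+1), F i) * ∏ i ∈ Finset.Ico (j.val+1) (m+1), F i := by
        rw [Finset.prod_range_mul_prod_Ico F (by omega : j.val + 1 ≤ m + 1)]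
    _ = p j := by
        have h2 : ∏ i ∈ Finset.Ico (j.val+1) (m+1), F i = 1 := by
          apply Finset.prod_eq_one
          intro i hi
          rw [Finset.mem_Ico] at hi
          rw [hF]
          simp only
          rw [if_neg (by omega), if_neg (by rintro ⟨h', -⟩; omega)]
        have h3 : ∏ i ∈ Finset.range j.val, F i = W j.val := by
          rw [← prodU j.val (by omega)]
          apply Finset.prod_congr rfl
          intro i hi
          rw [Finset.mem_range] at hi
          rw [hF]
          simp only
          rw [if_pos hi]
        rw [h2, mul_one, Finset.prod_range_succ, h3]
        have hPj : P j.val = p j := by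
          rw [hP]
          simp only
          rw [dif_pos ht]
        by_cases hjm : j.val = m
        · have hFj : F j.val = 1 := by rw [hF]; simp [hjm]
          rw [hFj, mul_one, hjm, hWlast]
          rw [hjm] at hPj
          exact hPj
        · have hFj : F j.val = f j.val := by rw [hF]; simp [hjm]
          rw [hFj, hWf, hPj]

/-- Weak Birkhoff–von Neumann theorem, countable version: every probabilistic map from a
countably infinite set to a finite set of cardinality `l` is a countable convex combination
of deterministic maps (the convex combination being taken pointwise in `PMF Y`). -/
theorem weak_birkhoff_von_neumann_countable {X Y : Type}
    [Countable X] [Infinite X] [Fintype Y]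
    (l : ℕ) (hY : Fintype.card Y = l)
    (γ : X → PMF Y) :
    ∃ (I : Type) (_ : Countable I) (g : I → X → Y) (a : I → ℝ≥0∞),
      (∀ i, a i ≤ 1) ∧ (∑' i, a i = 1) ∧
      ∀ x y, γ x y = ∑' i, a i * (PMF.pure (g i x)) y := by
  classical
  rcases l with - | m
  · -- `Y` is empty, contradiction with the existence of a `PMF` on it
    exfalso
    obtain ⟨x⟩ := (inferInstance : Nonempty X)
    have hempty : IsEmpty Y := Fintype.card_eq_zero_iff.mp hY
    have h1 := (γ x).tsum_coe
    rw [tsum_empty] at h1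
    exact zero_ne_one h1
  have e : Y ≃ Fin (m+1) := Fintype.equivFinOfCardEq hY
  have hsum : ∀ x, ∑ j, γ x (e.symm j) = 1 := by
    intro x
    rw [Equiv.sum_comp e.symm (γ x), ← tsum_fintype (L := SummationFilter.unconditional Y)]
    exact (γ x).tsum_coe
  choose c hc using fun x => bvn_vector_decomp m (fun j => γ x (e.symm j)) (hsum x)
  set a : (Fin (m+1) → ℕ) → ℝ≥0∞ := fun k => ∏ j', ((2:ℝ≥0∞)⁻¹)^(k j' + 1) with ha
  have hatotal : ∑' k : (Fin (m+1) → ℕ), a k = 1 := by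
    rw [ha, bvn_pi_tsum_prod (m+1) (fun _ x => ((2:ℝ≥0∞)⁻¹)^(x+1))]
    simp [bvn_geom_one]
  refine ⟨(Fin (m+1) → ℕ), inferInstance, fun k x => e.symm (c x k), a, ?_, hatotal, ?_⟩
  · intro i
    rw [← hatotal]
    exact ENNReal.le_tsum i
  · intro x y
    have hterm : ∀ k : Fin (m+1) → ℕ,
        a k * (PMF.pure (e.symm (c x k))) y = (if c x k = e y then a k else 0) := by
      intro k
      rw [PMF.pure_apply]
      by_cases h : c x k = e y
      · rw [if_pos h, if_pos, mul_one]
        rw [h, Equiv.symm_apply_apply]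
      · rw [if_neg h, if_neg, mul_zero]
        intro hy
        exact h (by rw [hy, Equiv.apply_symm_apply])
    rw [tsum_congr hterm, hc x (e y), Equiv.symm_apply_apply]
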